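/- arXiv:2109.14358 — 3 statements merged into one kernel-verified Lean document; each statement's English description precedes it below -/
import Mathlib

section
/- Under the DFRLP flow constraints, i(k,l) = 1 holds if and only if k < l, (k = 0 or x(k) = 1), (l = n+1 or x(l) = 1), and x(j) = 0 for every j with k < j < l. That is, the used cycle segments are exactly the consecutive pairs in the sequence consisting of the origin, the opened stations in their order along the flow, and the destination; in particular i is uniquely determined by x. -/
open Finset

private lemma bin_sum_exists_one (s : Finset ℕ) (f : ℕ → ℝ)
    (hb : ∀ a ∈ s, f a = 0 ∨ f a = 1) (h : ∑ a ∈ s, f a = 1) :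
    ∃ a ∈ s, f a = 1 := by
  by_contra hc
  push_neg at hc
  have h0 : ∑ a ∈ s, f a = 0 := Finset.sum_eq_zero fun a ha => by
    rcases hb a ha with h0 | h1
    · exact h0
    · exact absurd h1 (hc a ha)
  rw [h0] at h; norm_num at h

/-- Under the DFRLP flow constraints (locations `ℓ_0 = O_f, ℓ_1, …, ℓ_n, ℓ_{n+1} = D_f`,
binary station variables `x k` for `k = 1,…,n`, binary segment variables `i k l` for
`0 ≤ k < l ≤ n+1`), `i k l = 1` holds if and only if `(k = 0 ∨ x k = 1)`,
`(l = n+1 ∨ x l = 1)` and `x j = 0` for every `j` with `k < j < l`: the used cycle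
segments are exactly the consecutive pairs of the sequence
origin – opened stations – destination. -/
theorem dfrlp_segments_are_consecutive_pairs (n : ℕ) (x : ℕ → ℝ) (i : ℕ → ℕ → ℝ)
    (hx : ∀ k, 1 ≤ k → k ≤ n → (x k = 0 ∨ x k = 1))
    (hi : ∀ k l, k < l → l ≤ n + 1 → (i k l = 0 ∨ i k l = 1))
    (hout : ∀ k, 1 ≤ k → k ≤ n → ∑ l ∈ Finset.Icc (k + 1) (n + 1), i k l = x k)
    (hin : ∀ k, 1 ≤ k → k ≤ n → ∑ j ∈ Finset.range k, i j k = x k)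
    (horig : ∑ l ∈ Finset.Icc 1 (n + 1), i 0 l = 1)
    (hdest : ∑ k ∈ Finset.range (n + 1), i k (n + 1) = 1) :
    ∀ k l, k < l → l ≤ n + 1 →
      (i k l = 1 ↔
        (k = 0 ∨ x k = 1) ∧ (l = n + 1 ∨ x l = 1) ∧
          ∀ j, k < j → j < l → x j = 0) := by
  have hnn : ∀ k l, k < l → l ≤ n + 1 → 0 ≤ i k l := by
    intro k l h1 h2
    rcases hi k l h1 h2 with h | h <;> rw [h] <;> norm_num
  -- flow across each cut is 1
  have cut : ∀ m, m ≤ n →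
      ∑ a ∈ range (m + 1), ∑ b ∈ Icc (m + 1) (n + 1), i a b = 1 := by
    intro m
    induction m with
    | zero => intro _; simpa using horig
    | succ m ih =>
      intro hm
      have hm' : m ≤ n := by omega
      have key : ∀ a ∈ range (m + 1), ∑ b ∈ Icc (m + 1) (n + 1), i a b
          = i a (m + 1) + ∑ b ∈ Icc (m + 1 + 1) (n + 1), i a b := by
        intro a _
        have h1 : m + 1 ≤ n + 1 := by omega
        rw [← Finset.Ioc_insert_left h1, Finset.sum_insert (by simp),
          Finset.Icc_add_one_left_eq_Ioc]
      have e1 : ∑ a ∈ range (m + 1), ∑ b ∈ Icc (m + 1 + 1) (n + 1), i a b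
          = 1 - x (m + 1) := by
        have hS := ih hm'
        rw [Finset.sum_congr rfl key, Finset.sum_add_distrib,
          hin (m + 1) (by omega) hm] at hS
        linarith
      rw [Finset.sum_range_succ, e1, hout (m + 1) (by omega) hm]
      ring
  -- forward direction
  have fwd : ∀ k l, k < l → l ≤ n + 1 → i k l = 1 →
      (k = 0 ∨ x k = 1) ∧ (l = n + 1 ∨ x l = 1) ∧
        ∀ j, k < j → j < l → x j = 0 := by
    intro k l hkl hl h1
    refine ⟨?_, ?_, ?_⟩
    · rcases Nat.eq_zero_or_pos k with h0 | hk
      · exact Or.inl h0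
      · right
        have hkn : k ≤ n := by omega
        have hs := hout k hk hkn
        have hmem : l ∈ Icc (k + 1) (n + 1) := by simp [Finset.mem_Icc]; omega
        have hge : (1 : ℝ) ≤ x k := by
          rw [← hs, ← h1]
          exact Finset.single_le_sum
            (fun b hb => hnn k b (by simp [Finset.mem_Icc] at hb; omega)
              (by simp [Finset.mem_Icc] at hb; omega)) hmem
        rcases hx k hk hkn with h | h
        · exfalso; rw [h] at hge; linarith
        · exact h
    · rcases Nat.eq_or_lt_of_le hl with h0 | hln
      · exact Or.inl h0
      · right
        have hl1 : 1 ≤ l := by omega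
        have hln' : l ≤ n := by omega
        have hs := hin l hl1 hln'
        have hmem : k ∈ range l := by simp; omega
        have hge : (1 : ℝ) ≤ x l := by
          rw [← hs, ← h1]
          exact Finset.single_le_sum
            (fun b hb => hnn b l (by simp at hb; omega) (by omega)) hmem
        rcases hx l hl1 hln' with h | h
        · exfalso; rw [h] at hge; linarith
        · exact h
    · intro j hkj hjl
      by_contra hj
      have hj1 : 1 ≤ j := by omega
      have hjn : j ≤ n := by omega
      have hxj : x j = 1 := (hx j hj1 hjn).resolve_left hj
      have hsum := hin j hj1 hjn
      rw [hxj] at hsum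
      obtain ⟨a, ha, hia⟩ := bin_sum_exists_one (range j) (fun a => i a j)
        (fun a ha => hi a j (by simpa using ha) (by omega)) hsum
      obtain ⟨m, rfl⟩ : ∃ m, j = m + 1 := ⟨j - 1, by omega⟩
      have hc := cut m (by omega)
      rw [← Finset.sum_product'] at hc
      have hkl_mem : (k, l) ∈ range (m + 1) ×ˢ Icc (m + 1) (n + 1) := by
        simp [Finset.mem_Icc]; omega
      have haj_mem : (a, m + 1) ∈ range (m + 1) ×ˢ Icc (m + 1) (n + 1) := by
        simp [Finset.mem_Icc] at ha ⊢
        omega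
      have hne : (k, l) ≠ (a, m + 1) := by
        intro h
        rw [Prod.mk.injEq] at h
        omega
      have hsub : ({(k, l), (a, m + 1)} : Finset (ℕ × ℕ)) ⊆
          range (m + 1) ×ˢ Icc (m + 1) (n + 1) := by
        intro p hp
        simp at hp
        rcases hp with rfl | rfl
        · exact hkl_mem
        · exact haj_mem
      have hle := Finset.sum_le_sum_of_subset_of_nonneg hsub
        (fun p hp _ => by
          simp [Finset.mem_Icc] at hp
          exact hnn p.1 p.2 (by omega) (by omega))
        (f := fun p => i p.1 p.2)
      rw [Finset.sum_pair hne] at hle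
      rw [hc, h1, hia] at hle
      linarith
  intro k l hkl hl
  constructor
  · exact fwd k l hkl hl
  · rintro ⟨h1, h2, h3⟩
    have hex : ∃ l', k < l' ∧ l' ≤ n + 1 ∧ i k l' = 1 := by
      rcases Nat.eq_zero_or_pos k with rfl | hk
      · obtain ⟨l', hl', h⟩ := bin_sum_exists_one (Icc 1 (n + 1)) (i 0)
          (fun b hb => hi 0 b (by simp [Finset.mem_Icc] at hb; omega)
            (by simp [Finset.mem_Icc] at hb; omega)) horig
        simp [Finset.mem_Icc] at hl'
        exact ⟨l', by omega, by omega, h⟩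
      · have hxk : x k = 1 := h1.resolve_left (by omega)
        have hkn : k ≤ n := by omega
        have hs := hout k hk hkn
        rw [hxk] at hs
        obtain ⟨l', hl', h⟩ := bin_sum_exists_one (Icc (k + 1) (n + 1)) (i k)
          (fun b hb => hi k b (by simp [Finset.mem_Icc] at hb; omega)
            (by simp [Finset.mem_Icc] at hb; omega)) hs
        simp [Finset.mem_Icc] at hl'
        exact ⟨l', by omega, by omega, h⟩
    obtain ⟨l', hkl', hl'n, h1'⟩ := hex
    rcases lt_trichotomy l' l with hlt | rfl | hgt
    · exfalso
      obtain ⟨_, hc2, _⟩ := fwd k l' hkl' hl'n h1'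
      have hx1 : x l' = 1 := hc2.resolve_left (by omega)
      have hx0 : x l' = 0 := h3 l' hkl' hlt
      rw [hx0] at hx1; norm_num at hx1
    · exact h1'
    · exfalso
      obtain ⟨_, _, hc3⟩ := fwd k l' hkl' hl'n h1'
      have hxl0 : x l = 0 := hc3 l hkl hgt
      have hxl1 : x l = 1 := h2.resolve_left (by omega)
      rw [hxl0] at hxl1; norm_num at hxl1
end

section
/- Assume the DFRLP flow constraints hold and let t(k,l) ≥ 0 be the cycle-segment distances and R > 0 the driving range. Then the driving-range constraints ∑_{l=k+1}^{n+1} i(k,l)·t(k,l) ≤ R for every k ∈ {0,1,…,n} are satisfied if and only if t(k,l) ≤ R for every consecutive pair (k,l) of the sequence origin–opened stations–destination, i.e., for every pair (k,l) with k < l, (k = 0 or x(k) = 1), (l = n+1 or x(l) = 1), and x(j) = 0 for all k < j < l. Hence a flow can be covered (y_f = 1) exactly when the distance of each cycle segment between consecutively opened locations along its path does not exceed the driving range. -/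
/-- Under the DFRLP flow constraints, with cycle-segment distances `t k l ≥ 0` and
driving range `R > 0`, the driving-range constraints
`∑_{l=k+1}^{n+1} i k l * t k l ≤ R` for every `k ∈ {0,…,n}` hold if and only if
`t k l ≤ R` for every consecutive pair `(k,l)` of the sequence
origin – opened stations – destination. -/
theorem dfrlp_range_constraints_iff (n : ℕ) (x : ℕ → ℝ) (i : ℕ → ℕ → ℝ)
    (t : ℕ → ℕ → ℝ) (R : ℝ)
    (hx : ∀ k, 1 ≤ k → k ≤ n → (x k = 0 ∨ x k = 1))
    (hi : ∀ k l, k < l → l ≤ n + 1 → (i k l = 0 ∨ i k l = 1))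
    (hout : ∀ k, 1 ≤ k → k ≤ n → ∑ l ∈ Finset.Icc (k + 1) (n + 1), i k l = x k)
    (hin : ∀ k, 1 ≤ k → k ≤ n → ∑ j ∈ Finset.range k, i j k = x k)
    (horig : ∑ l ∈ Finset.Icc 1 (n + 1), i 0 l = 1)
    (hdest : ∑ k ∈ Finset.range (n + 1), i k (n + 1) = 1)
    (ht : ∀ k l, 0 ≤ t k l) (hR : 0 < R) :
    (∀ k, k ≤ n → ∑ l ∈ Finset.Icc (k + 1) (n + 1), i k l * t k l ≤ R) ↔
      (∀ k l, k < l → l ≤ n + 1 →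
        ((k = 0 ∨ x k = 1) ∧ (l = n + 1 ∨ x l = 1) ∧
          (∀ j, k < j → j < l → x j = 0)) → t k l ≤ R) := by
  -- nonnegativity of i on relevant pairs
  have hin0 : ∀ k l, k < l → l ≤ n + 1 → 0 ≤ i k l := by
    intro k l h1 h2
    rcases hi k l h1 h2 with h | h <;> simp [h]
  -- splitting an Icc sum at the bottom
  have hIccsplit : ∀ (a b : ℕ) (f : ℕ → ℝ), a ≤ b →
      ∑ l ∈ Finset.Icc a b, f l = f a + ∑ l ∈ Finset.Icc (a + 1) b, f l := by
    intro a b f hab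
    have he : Finset.Icc a b = insert a (Finset.Icc (a + 1) b) := by
      ext m; simp only [Finset.mem_Icc, Finset.mem_insert]; omega
    rw [he, Finset.sum_insert (by simp [Finset.mem_Icc])]
  -- cut lemma: exactly one unit of flow crosses each cut p ≤ n
  have hcut : ∀ p, p ≤ n →
      ∑ k ∈ Finset.range (p + 1), ∑ l ∈ Finset.Icc (p + 1) (n + 1), i k l = 1 := by
    intro p hp
    induction p with
    | zero => simpa using horig
    | succ q ih =>
      have hq : q ≤ n := Nat.le_of_succ_le hp
      have key := ih hq
      have hsplit : ∑ k ∈ Finset.range (q + 1), ∑ l ∈ Finset.Icc (q + 1) (n + 1), i k l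
          = (∑ k ∈ Finset.range (q + 1), i k (q + 1))
            + ∑ k ∈ Finset.range (q + 1), ∑ l ∈ Finset.Icc (q + 2) (n + 1), i k l := by
        rw [← Finset.sum_add_distrib]
        refine Finset.sum_congr rfl ?_
        intro k _
        exact hIccsplit (q + 1) (n + 1) (fun l => i k l) (by omega)
      have hinq : ∑ k ∈ Finset.range (q + 1), i k (q + 1) = x (q + 1) :=
        hin (q + 1) (by omega) hp
      rw [hsplit, hinq] at key
      rw [Finset.sum_range_succ]
      have houtq : ∑ l ∈ Finset.Icc (q + 1 + 1) (n + 1), i (q + 1) l = x (q + 1) :=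
        hout (q + 1) (by omega) hp
      have hq2 : q + 1 + 1 = q + 2 := rfl
      rw [hq2] at houtq
      rw [houtq]
      linarith
  -- uniqueness of the crossing arc
  have huniq : ∀ p, p ≤ n → ∀ a b c d, a ≤ p → p < b → b ≤ n + 1 → c ≤ p → p < d →
      d ≤ n + 1 → i a b = 1 → i c d = 1 → a = c ∧ b = d := by
    intro p hp a b c d hap hpb hbn hcp hpd hdn hab hcd
    by_contra hne
    have hprod : ∑ q ∈ (Finset.range (p + 1)) ×ˢ (Finset.Icc (p + 1) (n + 1)), i q.1 q.2
        = 1 := by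
      rw [Finset.sum_product]; exact hcut p hp
    have hmem1 : (a, b) ∈ (Finset.range (p + 1)) ×ˢ (Finset.Icc (p + 1) (n + 1)) := by
      simp only [Finset.mem_product, Finset.mem_range, Finset.mem_Icc]; omega
    have hmem2 : (c, d) ∈ (Finset.range (p + 1)) ×ˢ (Finset.Icc (p + 1) (n + 1)) := by
      simp only [Finset.mem_product, Finset.mem_range, Finset.mem_Icc]; omega
    have hne' : ((a, b) : ℕ × ℕ) ≠ (c, d) := by
      simp only [ne_eq, Prod.mk.injEq]; exact hne
    have h2 : (2 : ℝ) ≤ ∑ q ∈ (Finset.range (p + 1)) ×ˢ (Finset.Icc (p + 1) (n + 1)),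
        i q.1 q.2 := by
      have hsub : ({(a, b), (c, d)} : Finset (ℕ × ℕ))
          ⊆ (Finset.range (p + 1)) ×ˢ (Finset.Icc (p + 1) (n + 1)) := by
        intro q hq
        rcases Finset.mem_insert.mp hq with h | h
        · rw [h]; exact hmem1
        · rw [Finset.mem_singleton.mp h]; exact hmem2
      calc (2 : ℝ) = ∑ q ∈ ({(a, b), (c, d)} : Finset (ℕ × ℕ)), i q.1 q.2 := by
            rw [Finset.sum_pair hne']; rw [hab, hcd]; norm_num
        _ ≤ _ := by
            refine Finset.sum_le_sum_of_subset_of_nonneg hsub ?_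
            intro q hq _
            have hm := Finset.mem_product.mp hq
            have h1 := Finset.mem_range.mp hm.1
            have h2 := Finset.mem_Icc.mp hm.2
            exact hin0 q.1 q.2 (by omega) (by omega)
    linarith
  -- existence of a crossing arc
  have hexcut : ∀ p, p ≤ n → ∃ a b, a ≤ p ∧ p < b ∧ b ≤ n + 1 ∧ i a b = 1 := by
    intro p hp
    by_contra hno
    push_neg at hno
    have hz : ∑ k ∈ Finset.range (p + 1), ∑ l ∈ Finset.Icc (p + 1) (n + 1), i k l = 0 := by
      apply Finset.sum_eq_zero; intro k hk
      apply Finset.sum_eq_zero; intro l hl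
      have hk' := Finset.mem_range.mp hk
      have hl' := Finset.mem_Icc.mp hl
      rcases hi k l (by omega) (by omega) with h | h
      · exact h
      · exact absurd h (hno k l (by omega) (by omega) (by omega))
    rw [hcut p hp] at hz; norm_num at hz
  -- an opened station has an outgoing arc
  have hexout : ∀ k, 1 ≤ k → k ≤ n → x k = 1 → ∃ l, k < l ∧ l ≤ n + 1 ∧ i k l = 1 := by
    intro k h1 h2 hxk
    by_contra hno
    push_neg at hno
    have hz : ∑ l ∈ Finset.Icc (k + 1) (n + 1), i k l = 0 := by
      apply Finset.sum_eq_zero; intro l hl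
      have hl' := Finset.mem_Icc.mp hl
      rcases hi k l (by omega) (by omega) with h | h
      · exact h
      · exact absurd h (hno l (by omega) (by omega))
    rw [hout k h1 h2, hxk] at hz; norm_num at hz
  -- an opened station has an incoming arc
  have hexin : ∀ l, 1 ≤ l → l ≤ n → x l = 1 → ∃ m, m < l ∧ i m l = 1 := by
    intro l h1 h2 hxl
    by_contra hno
    push_neg at hno
    have hz : ∑ j ∈ Finset.range l, i j l = 0 := by
      apply Finset.sum_eq_zero; intro j hj
      have hj' := Finset.mem_range.mp hj
      rcases hi j l (by omega) (by omega) with h | h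
      · exact h
      · exact absurd h (hno j hj')
    rw [hin l h1 h2, hxl] at hz; norm_num at hz
  -- an arc out of k ≥ 1 forces x k = 1
  have hxout : ∀ k l, 1 ≤ k → k < l → l ≤ n + 1 → i k l = 1 → x k = 1 := by
    intro k l h1 hkl hln hikl
    have hkn : k ≤ n := by omega
    have hle : i k l ≤ ∑ l' ∈ Finset.Icc (k + 1) (n + 1), i k l' := by
      refine Finset.single_le_sum (f := fun l' => i k l') (fun l' hl' => ?_)
        (Finset.mem_Icc.mpr ⟨by omega, hln⟩)
      have := Finset.mem_Icc.mp hl'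
      exact hin0 k l' (by omega) (by omega)
    rw [hout k h1 hkn, hikl] at hle
    rcases hx k h1 hkn with h | h
    · rw [h] at hle; linarith
    · exact h
  -- an arc into l ≤ n forces x l = 1
  have hxin : ∀ k l, k < l → l ≤ n → i k l = 1 → x l = 1 := by
    intro k l hkl hln hikl
    have hle : i k l ≤ ∑ j ∈ Finset.range l, i j l := by
      refine Finset.single_le_sum (f := fun j => i j l) (fun j hj => ?_)
        (Finset.mem_range.mpr hkl)
      have := Finset.mem_range.mp hj
      exact hin0 j l (by omega) (by omega)
    rw [hin l (by omega) hln, hikl] at hle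
    rcases hx l (by omega) hln with h | h
    · rw [h] at hle; linarith
    · exact h
  constructor
  · -- driving-range constraints ⇒ consecutive distances ≤ R
    intro h k l hkl hln hcons
    obtain ⟨hkx, hlx, hmid⟩ := hcons
    have hkn : k ≤ n := by omega
    have hikl : i k l = 1 := by
      obtain ⟨a, b, hap, hpb, hbn, hab⟩ := hexcut k hkn
      have hak : a = k := by
        rcases Nat.eq_zero_or_pos k with h0 | h1
        · omega
        · have hxk : x k = 1 := hkx.resolve_left (by omega)
          obtain ⟨b', hb'1, hb'2, hb'⟩ := hexout k h1 hkn hxk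
          exact (huniq k hkn a b k b' hap hpb hbn le_rfl hb'1 hb'2 hab hb').1
      subst hak
      rcases lt_trichotomy b l with hbl | hbl | hbl
      · exfalso
        have hxb : x b = 1 := hxin a b hpb (by omega) hab
        have := hmid b hpb hbl
        linarith
      · rw [← hbl]; exact hab
      · exfalso
        have hxl : x l = 1 := hlx.resolve_left (by omega)
        obtain ⟨m, hml, him⟩ := hexin l (by omega) (by omega) hxl
        have hma : m ≤ a := by
          by_contra hma
          have hxm : x m = 1 := hxout m l (by omega) hml (by omega) him
          have := hmid m (by omega) hml
          linarith
        obtain ⟨_, hlb⟩ := huniq a hkn m l a b hma (by omega) (by omega) le_rfl hpb hbn him hab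
        omega
    have hle : i k l * t k l ≤ ∑ l' ∈ Finset.Icc (k + 1) (n + 1), i k l' * t k l' := by
      refine Finset.single_le_sum (f := fun l' => i k l' * t k l') (fun l' hl' => ?_)
        (Finset.mem_Icc.mpr ⟨by omega, hln⟩)
      have := Finset.mem_Icc.mp hl'
      exact mul_nonneg (hin0 k l' (by omega) (by omega)) (ht k l')
    rw [hikl, one_mul] at hle
    exact hle.trans (h k hkn)
  · -- consecutive distances ≤ R ⇒ driving-range constraints
    intro h k hkn
    have hrow01 : (∑ l ∈ Finset.Icc (k + 1) (n + 1), i k l = 0)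
        ∨ (∑ l ∈ Finset.Icc (k + 1) (n + 1), i k l = 1) := by
      rcases Nat.eq_zero_or_pos k with h0 | h1
      · right; subst h0; simpa using horig
      · rw [hout k h1 hkn]; exact hx k h1 hkn
    by_cases hall : ∀ l ∈ Finset.Icc (k + 1) (n + 1), i k l = 0
    · have hz : ∑ l ∈ Finset.Icc (k + 1) (n + 1), i k l * t k l = 0 :=
        Finset.sum_eq_zero (fun l hl => by rw [hall l hl, zero_mul])
      rw [hz]; linarith
    · push_neg at hall
      obtain ⟨l₀, hl₀s, hl₀ne⟩ := hall
      have hmem := Finset.mem_Icc.mp hl₀s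
      have hil₀ : i k l₀ = 1 := (hi k l₀ (by omega) (by omega)).resolve_left hl₀ne
      have hothers : ∀ l ∈ Finset.Icc (k + 1) (n + 1), l ≠ l₀ → i k l = 0 := by
        intro l hl hne
        have hl' := Finset.mem_Icc.mp hl
        by_contra hne0
        have hil : i k l = 1 := (hi k l (by omega) (by omega)).resolve_left hne0
        have hpair : (2 : ℝ) ≤ ∑ l' ∈ Finset.Icc (k + 1) (n + 1), i k l' := by
          calc (2 : ℝ) = ∑ l' ∈ ({l, l₀} : Finset ℕ), i k l' := by
                rw [Finset.sum_pair hne, hil, hil₀]; norm_num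
            _ ≤ _ := by
                refine Finset.sum_le_sum_of_subset_of_nonneg ?_ ?_
                · intro q hq
                  rcases Finset.mem_insert.mp hq with hq' | hq'
                  · rw [hq']; exact hl
                  · rw [Finset.mem_singleton.mp hq']; exact hl₀s
                · intro q hq _
                  have := Finset.mem_Icc.mp hq
                  exact hin0 k q (by omega) (by omega)
        rcases hrow01 with h0 | h1 <;> linarith
      have hsumt : ∑ l ∈ Finset.Icc (k + 1) (n + 1), i k l * t k l = t k l₀ := by
        rw [Finset.sum_eq_single_of_mem l₀ hl₀s
          (fun l hl hne => by rw [hothers l hl hne, zero_mul])]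
        rw [hil₀, one_mul]
      rw [hsumt]
      apply h k l₀ (by omega) (by omega)
      refine ⟨?_, ?_, ?_⟩
      · rcases Nat.eq_zero_or_pos k with h0 | h1
        · exact Or.inl h0
        · exact Or.inr (hxout k l₀ h1 (by omega) (by omega) hil₀)
      · rcases Nat.lt_or_ge l₀ (n + 1) with hl | hl
        · exact Or.inr (hxin k l₀ (by omega) (by omega) hil₀)
        · exact Or.inl (by omega)
      · intro j hkj hjl
        rcases hx j (by omega) (by omega) with h0 | h1
        · exact h0
        · exfalso
          obtain ⟨b, hb1, hb2, hb⟩ := hexout j (by omega) (by omega) h1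
          obtain ⟨hkj', _⟩ := huniq j (by omega) k l₀ j b (by omega) (by omega) (by omega)
            le_rfl hb1 hb2 hil₀ hb
          omega
end

section
/- Consider finitely many flows f, each covered by consecutive stations chosen from a finite set K of locations, where flow f has one-way path length T_f > 0, volume v_f > 0, refuelling frequency e_f ∈ (0,1] and covered proportion z_f ∈ [0,1], and let n_k ∈ ℕ be the number of charging poles installed at location k, each pole of capacity Cap > 0. If at every location k the capacity constraint holds — the sum over all flows stopping at k of their energy-demand term (incoming plus outgoing cycle-segment distance times v_f·e_f·z_f) is at most Cap·n_k — then ∑_f 2T_f·v_f·e_f·z_f ≤ Cap·∑_{k∈K} n_k. Consequently, with a limited total number S of charging poles the achievable flow volume covered is bounded, and full coverage of the total flow volume may be impossible no matter where the poles are placed. -/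
private lemma tel2 (s : ℕ → ℝ) (t : ℕ) :
    ∑ j ∈ Finset.Icc 1 t, (s (j + 1) - s j) = s (t + 1) - s 1 := by
  induction t with
  | zero => simp
  | succ t ih =>
    rw [Finset.sum_Icc_succ_top (by omega : 1 ≤ t + 1), ih]
    ring

private lemma tel1 (s : ℕ → ℝ) (t : ℕ) :
    ∑ j ∈ Finset.Icc 2 (t + 1), (s j - s (j - 1)) = s (t + 1) - s 1 := by
  induction t with
  | zero => simp
  | succ t ih =>
    rw [Finset.sum_Icc_succ_top (by omega : 2 ≤ t + 1 + 1), ih]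
    simp

private lemma telesum (s : ℕ → ℝ) (T : ℝ) (m : ℕ) (hm : 1 ≤ m) :
    ∑ j ∈ Finset.Icc 1 m,
      ((if j = 1 then 2 * s 1 else s j - s (j - 1)) +
       (if j = m then 2 * (T - s m) else s (j + 1) - s j)) = 2 * T := by
  obtain ⟨t, rfl⟩ : ∃ t, m = t + 1 := ⟨m - 1, by omega⟩
  rw [Finset.sum_add_distrib]
  have h1 : ∑ j ∈ Finset.Icc 1 (t + 1),
      (if j = 1 then 2 * s 1 else s j - s (j - 1)) = 2 * s 1 + (s (t + 1) - s 1) := by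
    have : Finset.Icc 1 (t + 1) = insert 1 (Finset.Icc 2 (t + 1)) := by
      ext x; simp [Finset.mem_Icc]; omega
    rw [this, Finset.sum_insert (by simp)]
    rw [if_pos rfl]
    congr 1
    rw [← tel1 s t]
    exact Finset.sum_congr rfl fun j hj => by
      rw [if_neg]; simp [Finset.mem_Icc] at hj; omega
  have h2 : ∑ j ∈ Finset.Icc 1 (t + 1),
      (if j = t + 1 then 2 * (T - s (t + 1)) else s (j + 1) - s j)
      = (s (t + 1) - s 1) + 2 * (T - s (t + 1)) := by
    rw [Finset.sum_Icc_succ_top (by omega : 1 ≤ t + 1), if_pos rfl]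
    congr 1
    rw [← tel2 s t]
    exact Finset.sum_congr rfl fun j hj => by
      rw [if_neg]; simp [Finset.mem_Icc] at hj; omega
  rw [h1, h2]; ring

/-- C-DFRLP aggregate capacity bound: if every flow `f` (one-way length `T f`,
volume `v f`, refuelling frequency `e f`, covered proportion `z f`) is covered
by consecutive stations located (via `loc`) at points of a finite set `K`, and
at every location `k ∈ K` the capacity constraint holds (the sum of the
energy-demand terms of the flows stopping at `k` is at most `Cap · n k`), then
`∑ f, 2·T f·v f·e f·z f ≤ Cap · ∑ k ∈ K, n k`. -/
theorem aggregate_capacity_bound {F α : Type*} [Fintype F] [DecidableEq α]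
    (K : Finset α) (R Cap : ℝ) (hR : 0 < R) (hCap : 0 < Cap)
    (T v e z : F → ℝ) (m : F → ℕ) (s : F → ℕ → ℝ) (loc : F → ℕ → α) (n : α → ℕ)
    (hT : ∀ f, 0 < T f) (hv : ∀ f, 0 < v f)
    (he : ∀ f, 0 < e f ∧ e f ≤ 1) (hz : ∀ f, 0 ≤ z f ∧ z f ≤ 1)
    (hm : ∀ f, 1 ≤ m f)
    (hpos : ∀ f, 0 < s f 1) (hlast : ∀ f, s f (m f) < T f)
    (hmono : ∀ f j, 1 ≤ j → j < m f → s f j < s f (j + 1))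
    (hcov1 : ∀ f, 2 * s f 1 ≤ R)
    (hcov2 : ∀ f j, 1 ≤ j → j < m f → s f (j + 1) - s f j ≤ R)
    (hcov3 : ∀ f, 2 * (T f - s f (m f)) ≤ R)
    (hloc : ∀ f j, 1 ≤ j → j ≤ m f → loc f j ∈ K)
    (hcapacity : ∀ k ∈ K,
      ∑ f, ∑ j ∈ Finset.Icc 1 (m f),
        (if loc f j = k then
          ((if j = 1 then 2 * s f 1 else s f j - s f (j - 1)) +
           (if j = m f then 2 * (T f - s f (m f)) else s f (j + 1) - s f j)) *
            (v f * e f * z f)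
        else 0) ≤ Cap * (n k : ℝ)) :
    ∑ f, 2 * T f * (v f * e f * z f) ≤ Cap * ∑ k ∈ K, (n k : ℝ) := by
  have key : ∑ f, 2 * T f * (v f * e f * z f)
      = ∑ k ∈ K, ∑ f, ∑ j ∈ Finset.Icc 1 (m f),
        (if loc f j = k then
          ((if j = 1 then 2 * s f 1 else s f j - s f (j - 1)) +
           (if j = m f then 2 * (T f - s f (m f)) else s f (j + 1) - s f j)) *
            (v f * e f * z f)
        else 0) := by
    rw [Finset.sum_comm]
    refine Finset.sum_congr rfl fun f _ => ?_
    rw [Finset.sum_comm]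
    have : ∀ j ∈ Finset.Icc 1 (m f), (∑ k ∈ K,
        (if loc f j = k then
          ((if j = 1 then 2 * s f 1 else s f j - s f (j - 1)) +
           (if j = m f then 2 * (T f - s f (m f)) else s f (j + 1) - s f j)) *
            (v f * e f * z f)
        else 0)) =
        ((if j = 1 then 2 * s f 1 else s f j - s f (j - 1)) +
         (if j = m f then 2 * (T f - s f (m f)) else s f (j + 1) - s f j)) *
          (v f * e f * z f) := by
      intro j hj
      simp only [Finset.mem_Icc] at hj
      rw [Finset.sum_ite_eq K (loc f j), if_pos (hloc f j hj.1 hj.2)]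
    rw [Finset.sum_congr rfl this, ← Finset.sum_mul, telesum (s f) (T f) (m f) (hm f)]
  rw [key, Finset.mul_sum]
  exact Finset.sum_le_sum hcapacity
end
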